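/- Let f : ℝⁿ → ℝ be C³ on B(x⁰, Δ̄) with ∇²f Lipschitz with constant L on B(x⁰, Δ̄), and let s, t ∈ ℝⁿ with x⁰, x⁰+s, x⁰+t, x⁰+s+t ∈ B(x⁰, Δ̄). Then |f(x⁰+s+t) − f(x⁰+s) − f(x⁰+t) + f(x⁰) − sᵀ∇²f(x⁰)t| ≤ (L/6)((‖s‖+‖t‖)³ + ‖s‖³ + ‖t‖³). -/

import Mathlib

open Matrix Metric

/-- The induced 2-norm (operator norm) of a matrix. -/
noncomputable def opNorm {m n : ℕ} (A : Matrix (Fin m) (Fin n) ℝ) : ℝ :=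
  ‖LinearMap.toContinuousLinearMap (Matrix.toEuclideanLin A)‖

/-- The Hessian matrix of f at x, as the matrix of second directional
derivatives along standard basis vectors. -/
noncomputable def hess {n : ℕ} (f : EuclideanSpace ℝ (Fin n) → ℝ)
    (x : EuclideanSpace ℝ (Fin n)) : Matrix (Fin n) (Fin n) ℝ :=
  Matrix.of fun i j =>
    iteratedFDeriv ℝ 2 f x ![EuclideanSpace.single i 1, EuclideanSpace.single j 1]


open Set

lemma euclid_decomp {n : ℕ} (s : EuclideanSpace ℝ (Fin n)) :
    s = ∑ i, s i • EuclideanSpace.single i 1 := by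
  have := (EuclideanSpace.basisFun (Fin n) ℝ).sum_repr s
  simp only [EuclideanSpace.basisFun_repr, EuclideanSpace.basisFun_apply] at this
  exact this.symm

lemma bilin_expand {n : ℕ} (T : EuclideanSpace ℝ (Fin n) →L[ℝ] EuclideanSpace ℝ (Fin n) →L[ℝ] ℝ)
    (s t : EuclideanSpace ℝ (Fin n)) :
    T s t = ∑ i, ∑ j, s i * T (EuclideanSpace.single i 1) (EuclideanSpace.single j 1) * t j := by
  conv_lhs => rw [euclid_decomp s, euclid_decomp t]
  simp only [map_sum, ContinuousLinearMap.sum_apply]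
  rw [Finset.sum_comm]
  refine Finset.sum_congr rfl fun i _ => Finset.sum_congr rfl fun j _ => ?_
  simp only [_root_.map_smul, ContinuousLinearMap.smul_apply, smul_eq_mul]
  ring

lemma matrix_bilin_bound {n : ℕ} (A : Matrix (Fin n) (Fin n) ℝ) (s t : EuclideanSpace ℝ (Fin n)) :
    |∑ i, ∑ j, s i * A i j * t j| ≤ opNorm A * ‖s‖ * ‖t‖ := by
  have h1 : ∑ i, ∑ j, s i * A i j * t j = inner ℝ s ((Matrix.toEuclideanLin A) t) := by
    rw [PiLp.inner_apply]
    refine Finset.sum_congr rfl fun i _ => ?_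
    simp only [RCLike.inner_apply, conj_trivial, toEuclideanLin_apply]
    simp [Matrix.mulVec, dotProduct, Finset.mul_sum, mul_assoc]
    rw [Finset.sum_mul]; exact Finset.sum_congr rfl fun j _ => by ring
  rw [h1]
  calc |inner ℝ s ((Matrix.toEuclideanLin A) t)| ≤ ‖s‖ * ‖(Matrix.toEuclideanLin A) t‖ :=
        abs_real_inner_le_norm _ _
    _ ≤ ‖s‖ * (opNorm A * ‖t‖) := by
        refine mul_le_mul_of_nonneg_left ?_ (norm_nonneg _)
        exact (LinearMap.toContinuousLinearMap (Matrix.toEuclideanLin A)).le_opNorm t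
    _ = opNorm A * ‖s‖ * ‖t‖ := by ring

lemma cubic_bound_1d {g g1 g2 : ℝ → ℝ} {M : ℝ}
    (hg : ∀ u ∈ Icc (0:ℝ) 1, HasDerivAt g (g1 u) u)
    (hg1 : ∀ u ∈ Icc (0:ℝ) 1, HasDerivAt g1 (g2 u) u)
    (hg2 : ∀ u ∈ Icc (0:ℝ) 1, |g2 u - g2 0| ≤ M * u) :
    |g 1 - g 0 - g1 0 - g2 0 / 2| ≤ M / 6 := by
  set F1 : ℝ → ℝ := fun u => g1 u - g1 0 - u * g2 0 with hF1def
  have hF1d : ∀ u ∈ Icc (0:ℝ) 1, HasDerivAt F1 (g2 u - g2 0) u := by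
    intro u hu
    have h := ((hg1 u hu).sub_const (g1 0)).sub ((hasDerivAt_id u).mul_const (g2 0))
    exact h.congr_deriv (by ring)
  have step1 : ∀ u ∈ Icc (0:ℝ) 1, |F1 u| ≤ M / 2 * u ^ 2 := by
    have := image_norm_le_of_norm_deriv_right_le_deriv_boundary
      (f := F1) (f' := fun u => g2 u - g2 0) (a := 0) (b := 1)
      (fun u hu => (hF1d u hu).continuousAt.continuousWithinAt)
      (fun u hu => (hF1d u (Ico_subset_Icc_self hu)).hasDerivWithinAt)
      (B := fun u => M / 2 * u ^ 2) (B' := fun u => M * u)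
      (by simp [hF1def])
      (fun x => by
        have h := (hasDerivAt_pow 2 x).const_mul (M / 2)
        refine h.congr_deriv ?_; push_cast; ring)
      (fun x hx => by
        rw [Real.norm_eq_abs]; exact hg2 x (Ico_subset_Icc_self hx))
    intro u hu; exact this hu
  set F0 : ℝ → ℝ := fun u => g u - g 0 - u * g1 0 - u ^ 2 / 2 * g2 0 with hF0def
  have hF0d : ∀ u ∈ Icc (0:ℝ) 1, HasDerivAt F0 (F1 u) u := by
    intro u hu
    have h := (((hg u hu).sub_const (g 0)).sub ((hasDerivAt_id u).mul_const (g1 0))).sub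
      (((hasDerivAt_pow 2 u).div_const 2).mul_const (g2 0))
    refine h.congr_deriv ?_
    simp only [hF1def]
    push_cast
    ring
  have step2 : ∀ u ∈ Icc (0:ℝ) 1, |F0 u| ≤ M / 6 * u ^ 3 := by
    have := image_norm_le_of_norm_deriv_right_le_deriv_boundary
      (f := F0) (f' := F1) (a := 0) (b := 1)
      (fun u hu => (hF0d u hu).continuousAt.continuousWithinAt)
      (fun u hu => (hF0d u (Ico_subset_Icc_self hu)).hasDerivWithinAt)
      (B := fun u => M / 6 * u ^ 3) (B' := fun u => M / 2 * u ^ 2)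
      (by simp [hF0def])
      (fun x => by
        have h := (hasDerivAt_pow 3 x).const_mul (M / 6)
        refine h.congr_deriv ?_; push_cast; ring)
      (fun x hx => by
        rw [Real.norm_eq_abs]; exact step1 x (Ico_subset_Icc_self hx))
    intro u hu; exact this hu
  have h1 := step2 1 (by norm_num)
  simp only [hF0def] at h1
  have e : g 1 - g 0 - 1 * g1 0 - 1 ^ 2 / 2 * g2 0 = g 1 - g 0 - g1 0 - g2 0 / 2 := by ring
  rw [e] at h1
  simpa using h1

lemma taylor_cubic {n : ℕ} {f : EuclideanSpace ℝ (Fin n) → ℝ}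
    {x0 d : EuclideanSpace ℝ (Fin n)} {S : Set (EuclideanSpace ℝ (Fin n))} (hS : IsOpen S)
    (hf : ContDiffOn ℝ 3 f S)
    (hmem : ∀ u ∈ Icc (0:ℝ) 1, x0 + u • d ∈ S) {M : ℝ}
    (hLip : ∀ u ∈ Icc (0:ℝ) 1,
      |fderiv ℝ (fderiv ℝ f) (x0 + u • d) d d - fderiv ℝ (fderiv ℝ f) x0 d d| ≤ M * u) :
    |f (x0 + d) - f x0 - fderiv ℝ f x0 d - fderiv ℝ (fderiv ℝ f) x0 d d / 2| ≤ M / 6 := by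
  have hline : ∀ u : ℝ, HasDerivAt (fun u : ℝ => x0 + u • d) d u := by
    intro u
    have h : HasDerivAt (fun u : ℝ => u • d) ((1:ℝ) • d) u := (hasDerivAt_id u).smul_const d
    simpa using h.const_add x0
  have hCD : ∀ u ∈ Icc (0:ℝ) 1, ContDiffAt ℝ 3 f (x0 + u • d) := fun u hu =>
    hf.contDiffAt (hS.mem_nhds (hmem u hu))
  have hg : ∀ u ∈ Icc (0:ℝ) 1,
      HasDerivAt (fun u : ℝ => f (x0 + u • d)) (fderiv ℝ f (x0 + u • d) d) u := by
    intro u hu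
    have hdf : DifferentiableAt ℝ f (x0 + u • d) :=
      (hCD u hu).differentiableAt (by norm_num)
    exact hdf.hasFDerivAt.comp_hasDerivAt u (hline u)
  have hg1 : ∀ u ∈ Icc (0:ℝ) 1,
      HasDerivAt (fun u : ℝ => fderiv ℝ f (x0 + u • d) d)
        (fderiv ℝ (fderiv ℝ f) (x0 + u • d) d d) u := by
    intro u hu
    have hdF : DifferentiableAt ℝ (fderiv ℝ f) (x0 + u • d) :=
      ((hCD u hu).fderiv_right (m := 2) (by norm_num)).differentiableAt (by norm_num)
    have h1 : HasDerivAt (fun u : ℝ => fderiv ℝ f (x0 + u • d))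
        (fderiv ℝ (fderiv ℝ f) (x0 + u • d) d) u :=
      hdF.hasFDerivAt.comp_hasDerivAt u (hline u)
    have h2 := h1.clm_apply (hasDerivAt_const u d)
    simpa using h2
  have key := cubic_bound_1d hg hg1 (by
    intro u hu
    have := hLip u hu
    simpa using this)
  simpa using key

lemma hess_eq {n : ℕ} (f : EuclideanSpace ℝ (Fin n) → ℝ) (y : EuclideanSpace ℝ (Fin n))
    (i j : Fin n) :
    hess f y i j = fderiv ℝ (fderiv ℝ f) y (EuclideanSpace.single i 1)
      (EuclideanSpace.single j 1) := by
  show iteratedFDeriv ℝ 2 f y ![_, _] = _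
  rw [iteratedFDeriv_two_apply]
  simp

/-- second-difference estimate.  If f is C³ on B(x⁰,Δ̄) with
∇²f L-Lipschitz there, and x⁰, x⁰+s, x⁰+t, x⁰+s+t ∈ B(x⁰,Δ̄), then
|f(x⁰+s+t) − f(x⁰+s) − f(x⁰+t) + f(x⁰) − sᵀ∇²f(x⁰)t|
  ≤ (L/6)((‖s‖+‖t‖)³ + ‖s‖³ + ‖t‖³). -/
theorem second_difference_estimate {n : ℕ}
    (f : EuclideanSpace ℝ (Fin n) → ℝ) (x0 s t : EuclideanSpace ℝ (Fin n))
    (Δbar L : ℝ)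
    (hf : ContDiffOn ℝ 3 f (ball x0 Δbar))
    (hLip : ∀ y ∈ ball x0 Δbar, ∀ z ∈ ball x0 Δbar,
      opNorm (hess f y - hess f z) ≤ L * ‖y - z‖)
    (hs : x0 + s ∈ ball x0 Δbar) (ht : x0 + t ∈ ball x0 Δbar)
    (hst : x0 + s + t ∈ ball x0 Δbar) :
    |f (x0 + s + t) - f (x0 + s) - f (x0 + t) + f x0
        - ∑ i, ∑ j, s i * hess f x0 i j * t j|
      ≤ L / 6 * ((‖s‖ + ‖t‖) ^ 3 + ‖s‖ ^ 3 + ‖t‖ ^ 3) := by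
  have hΔ : 0 < Δbar := lt_of_le_of_lt dist_nonneg (mem_ball.mp hs)
  have hx0 : x0 ∈ ball x0 Δbar := mem_ball_self hΔ
  -- bilinear Lipschitz bound
  have hbil : ∀ y ∈ ball x0 Δbar, ∀ z ∈ ball x0 Δbar,
      ∀ a b : EuclideanSpace ℝ (Fin n),
      |fderiv ℝ (fderiv ℝ f) y a b - fderiv ℝ (fderiv ℝ f) z a b|
        ≤ L * ‖y - z‖ * ‖a‖ * ‖b‖ := by
    intro y hy z hz a b
    have ey : fderiv ℝ (fderiv ℝ f) y a b = ∑ i, ∑ j, a i * hess f y i j * b j := by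
      rw [bilin_expand (fderiv ℝ (fderiv ℝ f) y) a b]
      exact Finset.sum_congr rfl fun i _ => Finset.sum_congr rfl fun j _ => by
        rw [hess_eq]
    have ez : fderiv ℝ (fderiv ℝ f) z a b = ∑ i, ∑ j, a i * hess f z i j * b j := by
      rw [bilin_expand (fderiv ℝ (fderiv ℝ f) z) a b]
      exact Finset.sum_congr rfl fun i _ => Finset.sum_congr rfl fun j _ => by
        rw [hess_eq]
    have ediff : fderiv ℝ (fderiv ℝ f) y a b - fderiv ℝ (fderiv ℝ f) z a b
        = ∑ i, ∑ j, a i * (hess f y - hess f z) i j * b j := by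
      rw [ey, ez, ← Finset.sum_sub_distrib]
      refine Finset.sum_congr rfl fun i _ => ?_
      rw [← Finset.sum_sub_distrib]
      refine Finset.sum_congr rfl fun j _ => ?_
      simp [Matrix.sub_apply]; ring
    rw [ediff]
    calc |∑ i, ∑ j, a i * (hess f y - hess f z) i j * b j|
        ≤ opNorm (hess f y - hess f z) * ‖a‖ * ‖b‖ := matrix_bilin_bound _ a b
      _ ≤ L * ‖y - z‖ * ‖a‖ * ‖b‖ := by
          have h := hLip y hy z hz
          exact mul_le_mul_of_nonneg_right
            (mul_le_mul_of_nonneg_right h (norm_nonneg a)) (norm_nonneg b)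
  -- case L < 0
  by_cases hL : 0 ≤ L
  swap
  · push_neg at hL
    have hs0 : s = 0 := by
      by_contra hne
      have h := hLip (x0 + s) hs x0 hx0
      have h2 : x0 + s - x0 = s := by abel
      rw [h2] at h
      have : (0:ℝ) ≤ opNorm (hess f (x0+s) - hess f x0) := norm_nonneg _
      have hpos : (0:ℝ) < ‖s‖ := norm_pos_iff.mpr hne
      nlinarith
    have ht0 : t = 0 := by
      by_contra hne
      have h := hLip (x0 + t) ht x0 hx0
      have h2 : x0 + t - x0 = t := by abel
      rw [h2] at h
      have : (0:ℝ) ≤ opNorm (hess f (x0+t) - hess f x0) := norm_nonneg _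
      have hpos : (0:ℝ) < ‖t‖ := norm_pos_iff.mpr hne
      nlinarith
    subst hs0; subst ht0
    simp
  -- main case
  · -- segment membership
    have hseg : ∀ d : EuclideanSpace ℝ (Fin n), x0 + d ∈ ball x0 Δbar →
        ∀ u ∈ Icc (0:ℝ) 1, x0 + u • d ∈ ball x0 Δbar := by
      intro d hd u hu
      have e : x0 + u • d = (1 - u) • x0 + u • (x0 + d) := by module
      rw [e]
      exact (convex_ball x0 Δbar) hx0 hd (by linarith [hu.2]) hu.1 (by ring)
    -- Taylor estimates
    have hR : ∀ d : EuclideanSpace ℝ (Fin n), x0 + d ∈ ball x0 Δbar →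
        |f (x0 + d) - f x0 - fderiv ℝ f x0 d - fderiv ℝ (fderiv ℝ f) x0 d d / 2|
          ≤ L * ‖d‖ ^ 3 / 6 := by
      intro d hd
      refine taylor_cubic isOpen_ball hf (hseg d hd) ?_
      intro u hu
      have hmem := hseg d hd u hu
      have h := hbil (x0 + u • d) hmem x0 hx0 d d
      have e : x0 + u • d - x0 = u • d := by abel
      rw [e, norm_smul] at h
      have : ‖u‖ = u := by rw [Real.norm_eq_abs, abs_of_nonneg hu.1]
      rw [this] at h
      calc |fderiv ℝ (fderiv ℝ f) (x0 + u • d) d d - fderiv ℝ (fderiv ℝ f) x0 d d|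
          ≤ L * (u * ‖d‖) * ‖d‖ * ‖d‖ := h
        _ = L * ‖d‖ ^ 3 * u := by ring
    have hRst := hR (s + t) (by rwa [← add_assoc])
    have hRs := hR s hs
    have hRt := hR t ht
    -- symmetry
    have hsymm : fderiv ℝ (fderiv ℝ f) x0 t s = fderiv ℝ (fderiv ℝ f) x0 s t :=
      ((hf.contDiffAt (isOpen_ball.mem_nhds hx0)).isSymmSndFDerivAt (by norm_num)) t s
    -- the sum equals B s t
    have hsum : ∑ i, ∑ j, s i * hess f x0 i j * t j = fderiv ℝ (fderiv ℝ f) x0 s t := by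
      rw [bilin_expand (fderiv ℝ (fderiv ℝ f) x0) s t]
      exact Finset.sum_congr rfl fun i _ => Finset.sum_congr rfl fun j _ => by rw [hess_eq]
    -- expand bilinear and linear parts
    have hBexp : fderiv ℝ (fderiv ℝ f) x0 (s + t) (s + t)
        = fderiv ℝ (fderiv ℝ f) x0 s s + 2 * fderiv ℝ (fderiv ℝ f) x0 s t
          + fderiv ℝ (fderiv ℝ f) x0 t t := by
      rw [map_add]
      simp only [ContinuousLinearMap.add_apply, map_add]
      rw [hsymm]; ring
    have hgexp : fderiv ℝ f x0 (s + t) = fderiv ℝ f x0 s + fderiv ℝ f x0 t := map_add _ s t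
    -- combine
    have key : f (x0 + s + t) - f (x0 + s) - f (x0 + t) + f x0
        - ∑ i, ∑ j, s i * hess f x0 i j * t j
        = (f (x0 + (s + t)) - f x0 - fderiv ℝ f x0 (s + t)
            - fderiv ℝ (fderiv ℝ f) x0 (s + t) (s + t) / 2)
          - (f (x0 + s) - f x0 - fderiv ℝ f x0 s - fderiv ℝ (fderiv ℝ f) x0 s s / 2)
          - (f (x0 + t) - f x0 - fderiv ℝ f x0 t - fderiv ℝ (fderiv ℝ f) x0 t t / 2) := by
      rw [hsum, hBexp, hgexp, ← add_assoc]
      ring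
    rw [key]
    have htri : |(f (x0 + (s + t)) - f x0 - fderiv ℝ f x0 (s + t)
            - fderiv ℝ (fderiv ℝ f) x0 (s + t) (s + t) / 2)
          - (f (x0 + s) - f x0 - fderiv ℝ f x0 s - fderiv ℝ (fderiv ℝ f) x0 s s / 2)
          - (f (x0 + t) - f x0 - fderiv ℝ f x0 t - fderiv ℝ (fderiv ℝ f) x0 t t / 2)|
        ≤ L * ‖s + t‖ ^ 3 / 6 + L * ‖s‖ ^ 3 / 6 + L * ‖t‖ ^ 3 / 6 := by
      calc _ ≤ |(f (x0 + (s + t)) - f x0 - fderiv ℝ f x0 (s + t)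
            - fderiv ℝ (fderiv ℝ f) x0 (s + t) (s + t) / 2)
          - (f (x0 + s) - f x0 - fderiv ℝ f x0 s - fderiv ℝ (fderiv ℝ f) x0 s s / 2)|
          + |f (x0 + t) - f x0 - fderiv ℝ f x0 t - fderiv ℝ (fderiv ℝ f) x0 t t / 2| :=
            abs_sub _ _
        _ ≤ _ := by
            have h1 := abs_sub (f (x0 + (s + t)) - f x0 - fderiv ℝ f x0 (s + t)
              - fderiv ℝ (fderiv ℝ f) x0 (s + t) (s + t) / 2)
              (f (x0 + s) - f x0 - fderiv ℝ f x0 s - fderiv ℝ (fderiv ℝ f) x0 s s / 2)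
            linarith [hRst, hRs, hRt]
    refine htri.trans ?_
    have hnorm : ‖s + t‖ ^ 3 ≤ (‖s‖ + ‖t‖) ^ 3 := by
      exact pow_le_pow_left₀ (norm_nonneg _) (norm_add_le s t) 3
    nlinarith [hnorm]
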